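/- Let A be a structure of cardinality ω₁ such that Player ∃ has a winning strategy in the splitting game G(A) of length ω₁ (at each round ∀ names a point to enter the domain or range of the countable partial automorphism π, and ∃ must produce two contradictory extensions of π covering that point, of which ∀ selects one; ∃ wins by surviving ω₁ rounds). Then A has exactly 2^{ω₁} automorphisms. -/

import Mathlib

open Cardinal FirstOrder FirstOrder.Language

noncomputable section

/-- ω₁ as an ordinal: games below have this length. -/
abbrev om1 : Ordinal := (Cardinal.aleph 1).ord

/-- The domain of a set of ordered pairs. -/
def pdom {X Y : Type*} (p : Set (X × Y)) : Set X := {x | ∃ y, (x, y) ∈ p}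

/-- The range of a set of ordered pairs. -/
def pran {X Y : Type*} (p : Set (X × Y)) : Set Y := {y | ∃ x, (x, y) ∈ p}

/-- A set of ordered pairs is a partial automorphism of the `L`-structure `M`:
it is functional and injective, preserves all relations in both directions, and is
compatible with all function symbols. -/
def IsPartialAuto (L : FirstOrder.Language) (M : Type*) [L.Structure M]
    (p : Set (M × M)) : Prop :=
  (∀ a b b', (a, b) ∈ p → (a, b') ∈ p → b = b') ∧
  (∀ a a' b, (a, b) ∈ p → (a', b) ∈ p → a = a') ∧
  (∀ (n : ℕ) (R : L.Relations n) (xs ys : Fin n → M),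
    (∀ i, (xs i, ys i) ∈ p) → (Structure.RelMap R xs ↔ Structure.RelMap R ys)) ∧
  (∀ (n : ℕ) (F : L.Functions n) (xs ys : Fin n → M),
    (∀ i, (xs i, ys i) ∈ p) →
      (∀ b, (Structure.funMap F xs, b) ∈ p → b = Structure.funMap F ys) ∧
      (∀ a, (a, Structure.funMap F ys) ∈ p → a = Structure.funMap F xs)) ∧
  True

/-- Player ∃ has a winning strategy in the splitting game `G(A)` of length ω₁ on the
structure `M`: at round `α`, ∀ demands (via `m α : M ⊕ M`) that a point of `M` enter
the domain (`inl`) or the range (`inr`) of the countable partial automorphism built so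
far, and ∃ must produce two contradictory countable partial automorphisms, each
extending all positions previously chosen by ∀ and covering the demanded point; ∀ then
selects one of the two via `c α : Bool`.  A strategy is a map `S` from the entire
sequences of ∀'s demands and choices to the offered pairs, which at round `α` may use
only the demands `m β` for `β ≤ α` and the choices `c β` for `β < α`;
it is winning if along every play all its offers at all rounds `< ω₁` are legal. -/
def ExistsWinsSplittingGame (L : FirstOrder.Language) (M : Type) [L.Structure M] :
    Prop :=
  ∃ S : (Ordinal.{0} → M ⊕ M) → (Ordinal.{0} → Bool) → Ordinal.{0} → Set (M × M) × Set (M × M),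
    (∀ m m' c c' α, (∀ β ≤ α, m β = m' β) → (∀ β < α, c β = c' β) →
      S m c α = S m' c' α) ∧
    ∀ (m : Ordinal.{0} → M ⊕ M) (c : Ordinal.{0} → Bool), ∀ α : Ordinal.{0}, α < om1 →
      IsPartialAuto L M (S m c α).1 ∧ IsPartialAuto L M (S m c α).2 ∧
      (S m c α).1.Countable ∧ (S m c α).2.Countable ∧
      (∀ β < α, (if c β then (S m c β).1 else (S m c β).2) ⊆ (S m c α).1 ∧
                (if c β then (S m c β).1 else (S m c β).2) ⊆ (S m c α).2) ∧
      (match m α with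
        | Sum.inl a => a ∈ pdom (S m c α).1 ∧ a ∈ pdom (S m c α).2
        | Sum.inr b => b ∈ pran (S m c α).1 ∧ b ∈ pran (S m c α).2) ∧
      (∃ x y y', (x, y) ∈ (S m c α).1 ∧ (x, y') ∈ (S m c α).2 ∧ y ≠ y')

section Aux

variable {L : FirstOrder.Language} {M : Type} [L.Structure M]

/-- The requirement that a strategy is legal along every play. -/
def ValidStrat (L : FirstOrder.Language) (M : Type) [L.Structure M]
    (S : (Ordinal.{0} → M ⊕ M) → (Ordinal.{0} → Bool) → Ordinal.{0} →
      Set (M × M) × Set (M × M)) : Prop :=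
  ∀ (m : Ordinal.{0} → M ⊕ M) (c : Ordinal.{0} → Bool), ∀ α : Ordinal.{0}, α < om1 →
      IsPartialAuto L M (S m c α).1 ∧ IsPartialAuto L M (S m c α).2 ∧
      (S m c α).1.Countable ∧ (S m c α).2.Countable ∧
      (∀ β < α, (if c β then (S m c β).1 else (S m c β).2) ⊆ (S m c α).1 ∧
                (if c β then (S m c β).1 else (S m c β).2) ⊆ (S m c α).2) ∧
      (match m α with
        | Sum.inl a => a ∈ pdom (S m c α).1 ∧ a ∈ pdom (S m c α).2
        | Sum.inr b => b ∈ pran (S m c α).1 ∧ b ∈ pran (S m c α).2) ∧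
      (∃ x y y', (x, y) ∈ (S m c α).1 ∧ (x, y') ∈ (S m c α).2 ∧ y ≠ y')

variable (S : (Ordinal.{0} → M ⊕ M) → (Ordinal.{0} → Bool) → Ordinal.{0} →
      Set (M × M) × Set (M × M))
  (m : Ordinal.{0} → M ⊕ M) (c : Ordinal.{0} → Bool)

/-- The set chosen by ∀ at round `α`. -/
def chosen (α : Ordinal) : Set (M × M) := if c α then (S m c α).1 else (S m c α).2

/-- The union of all sets chosen along the play. -/
def piset : Set (M × M) := ⋃ α, ⋃ (_ : α < om1), chosen S m c α

lemma om1_isLimit : Order.IsSuccLimit (om1 : Ordinal) :=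
  Cardinal.isSuccLimit_ord (Cardinal.aleph0_le_aleph 1)

lemma mem_piset_iff {p : M × M} :
    p ∈ piset S m c ↔ ∃ α, α < om1 ∧ p ∈ chosen S m c α := by
  simp [piset, Set.mem_iUnion]

/-- Finitely many elements of `piset` sit inside a single partial automorphism
produced by the strategy. -/
lemma mem_big (hS : ValidStrat L M S) {n : ℕ} (p : Fin n → M × M)
    (hp : ∀ i, p i ∈ piset S m c) :
    ∃ α, α < om1 ∧ IsPartialAuto L M (S m c α).1 ∧ ∀ i, p i ∈ (S m c α).1 := by
  choose β hβ hmem using fun i => (mem_piset_iff S m c).mp (hp i)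
  set γ : Ordinal := Finset.univ.sup β with hγdef
  have hbot : (⊥ : Ordinal) < om1 := Ordinal.bot_eq_zero ▸ (om1_isLimit).pos
  have hγ : γ < om1 := by
    refine (Finset.sup_lt_iff hbot).mpr ?_
    intro i _
    exact hβ i
  have hα : Order.succ γ < om1 := (om1_isLimit).succ_lt hγ
  refine ⟨Order.succ γ, hα, (hS m c _ hα).1, fun i => ?_⟩
  have hlt : β i < Order.succ γ :=
    lt_of_le_of_lt (Finset.le_sup (Finset.mem_univ i)) (Order.lt_succ γ)
  exact ((hS m c _ hα).2.2.2.2.1 (β i) hlt).1 (hmem i)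

lemma piset_functional (hS : ValidStrat L M S) {a b b' : M}
    (h1 : (a, b) ∈ piset S m c) (h2 : (a, b') ∈ piset S m c) : b = b' := by
  obtain ⟨α, _, hpa, hmem⟩ := mem_big S m c hS ![(a, b), (a, b')]
    (by intro i; fin_cases i <;> assumption)
  exact hpa.1 a b b' (hmem 0) (hmem 1)

lemma piset_injective (hS : ValidStrat L M S) {a a' b : M}
    (h1 : (a, b) ∈ piset S m c) (h2 : (a', b) ∈ piset S m c) : a = a' := by
  obtain ⟨α, _, hpa, hmem⟩ := mem_big S m c hS ![(a, b), (a', b)]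
    (by intro i; fin_cases i <;> assumption)
  exact hpa.2.1 a a' b (hmem 0) (hmem 1)

lemma piset_total (hS : ValidStrat L M S)
    (hm : ∀ v : M ⊕ M, ∃ α, α < om1 ∧ m α = v) :
    (∀ a : M, ∃ b, (a, b) ∈ piset S m c) ∧ (∀ b : M, ∃ a, (a, b) ∈ piset S m c) := by
  constructor
  · intro a
    obtain ⟨α, hα, hmα⟩ := hm (Sum.inl a)
    have h6 := (hS m c α hα).2.2.2.2.2.1
    rw [hmα] at h6
    have : a ∈ pdom (chosen S m c α) := by
      unfold chosen
      by_cases hb : c α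
      · simpa [hb] using h6.1
      · simpa [hb] using h6.2
    obtain ⟨b, hb⟩ := this
    exact ⟨b, (mem_piset_iff S m c).mpr ⟨α, hα, hb⟩⟩
  · intro b
    obtain ⟨α, hα, hmα⟩ := hm (Sum.inr b)
    have h6 := (hS m c α hα).2.2.2.2.2.1
    rw [hmα] at h6
    have : b ∈ pran (chosen S m c α) := by
      unfold chosen
      by_cases hb : c α
      · simpa [hb] using h6.1
      · simpa [hb] using h6.2
    obtain ⟨a, ha⟩ := this
    exact ⟨a, (mem_piset_iff S m c).mpr ⟨α, hα, ha⟩⟩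

/-- The union of the play is (the graph of) an automorphism of `M`. -/
lemma exists_auto (hS : ValidStrat L M S)
    (hm : ∀ v : M ⊕ M, ∃ α, α < om1 ∧ m α = v) :
    ∃ e : M ≃[L] M, ∀ x y : M, (x, y) ∈ piset S m c → e x = y := by
  obtain ⟨hdom, hran⟩ := piset_total S m c hS hm
  choose F hF using hdom
  choose G hG using hran
  have hleft : ∀ a, G (F a) = a := fun a =>
    piset_injective S m c hS (hG (F a)) (hF a)
  have hright : ∀ b, F (G b) = b := fun b =>
    piset_functional S m c hS (hF (G b)) (hG b)
  refine ⟨⟨⟨F, G, hleft, hright⟩, ?_, ?_⟩, ?_⟩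
  · intro n f x
    obtain ⟨α, _, hpa, hmem⟩ := mem_big S m c hS
      (Fin.cons (Structure.funMap f x, F (Structure.funMap f x)) (fun i => (x i, F (x i))))
      (by
        intro i
        refine Fin.cases ?_ ?_ i
        · exact hF _
        · intro j; exact hF _)
    have hmem0 := hmem 0
    have hmems : ∀ j : Fin n, (x j, F (x j)) ∈ (S m c α).1 := fun j => hmem j.succ
    exact (hpa.2.2.2.1 n f x (fun j => F (x j)) hmems).1 _ hmem0
  · intro n r x
    obtain ⟨α, _, hpa, hmem⟩ := mem_big S m c hS (fun i => (x i, F (x i)))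
      (fun i => hF _)
    exact (hpa.2.2.1 n r x (fun j => F (x j)) hmem).symm
  · intro x y hxy
    exact piset_functional S m c hS (hF x) hxy

end Aux

/-- If `A` is a structure of cardinality ω₁ and Player ∃ has a winning strategy in the
splitting game `G(A)` of length ω₁ (i.e. `A` is perfect), then `A` has exactly `2^ω₁`
automorphisms. -/
theorem perfect_implies_two_omega1_automorphisms
    (L : FirstOrder.Language) (M : Type) [L.Structure M]
    (hM : #M = Cardinal.aleph 1)
    (hwin : ExistsWinsSplittingGame L M) :
    #(M ≃[L] M) = 2 ^ Cardinal.aleph 1 := by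
  obtain ⟨S, hcoh, hS⟩ := hwin
  have hS' : ValidStrat L M S := hS
  have hMne : Nonempty M := by
    rw [← Cardinal.mk_ne_zero_iff, hM]
    exact (Cardinal.aleph_pos 1).ne'
  have := Classical.inhabited_of_nonempty hMne
  -- build the enumeration m of M ⊕ M by ordinals < ω₁
  have hcards : #(om1.ToType) = #(M ⊕ M) := by
    simp [Cardinal.mk_sum, hM, Cardinal.add_eq_self (Cardinal.aleph0_le_aleph 1),
      Cardinal.mk_toType, Cardinal.card_ord]
  obtain ⟨e0⟩ := Cardinal.eq.mp hcards
  set m : Ordinal.{0} → M ⊕ M :=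
    fun α => if h : α < om1 then e0 ((Ordinal.ToType.mk (o := om1)) ⟨α, h⟩) else Sum.inl default
    with hmdef
  have hm : ∀ v : M ⊕ M, ∃ α, α < om1 ∧ m α = v := by
    intro v
    set x := ((Ordinal.ToType.mk (o := om1))).symm (e0.symm v) with hx
    refine ⟨x.1, x.2, ?_⟩
    have h1 : m x.1 = e0 ((Ordinal.ToType.mk (o := om1)) x) := dif_pos x.2
    rw [h1, hx]
    simp
  -- the injection from binary sequences of length ω₁ into automorphisms
  set cf : (om1.ToType → Bool) → Ordinal.{0} → Bool :=
    fun f α => if h : α < om1 then f ((Ordinal.ToType.mk (o := om1)) ⟨α, h⟩) else false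
    with hcfdef
  have key : ∀ f : om1.ToType → Bool,
      ∃ e : M ≃[L] M, ∀ x y : M, (x, y) ∈ piset S m (cf f) → e x = y :=
    fun f => exists_auto S m (cf f) hS' hm
  set Φ : (om1.ToType → Bool) → (M ≃[L] M) := fun f => Classical.choose (key f) with hΦdef
  have hΦspec : ∀ f, ∀ x y : M, (x, y) ∈ piset S m (cf f) → Φ f x = y :=
    fun f => Classical.choose_spec (key f)
  have hΦinj : Function.Injective Φ := by
    intro f f' hff'
    by_contra hne
    obtain ⟨t, ht⟩ := Function.ne_iff.mp hne
    -- cf f and cf f' differ somewhere below ω₁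
    have hα₀ : ∃ α, cf f α ≠ cf f' α := by
      set x := ((Ordinal.ToType.mk (o := om1))).symm t with hx
      refine ⟨x.1, ?_⟩
      have h1 : ∀ g : om1.ToType → Bool, cf g x.1 = g ((Ordinal.ToType.mk (o := om1)) x) :=
        fun g => dif_pos x.2
      rw [h1 f, h1 f', hx]
      simpa using ht
    set D : Set Ordinal.{0} := {β | cf f β ≠ cf f' β} with hDdef
    have hDne : D.Nonempty := hα₀
    set β := Ordinal.lt_wf.min D hDne with hβdef
    have hβD : β ∈ D := Ordinal.lt_wf.min_mem D hDne
    have hβlt : β < om1 := by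
      by_contra hβge
      push_neg at hβge
      have h1 : ∀ g : om1.ToType → Bool, cf g β = false :=
        fun g => dif_neg (not_lt.mpr hβge)
      exact hβD ((h1 f).trans (h1 f').symm)
    have hagree : ∀ γ < β, cf f γ = cf f' γ := by
      intro γ hγ
      by_contra hγD
      exact Ordinal.lt_wf.not_lt_min D hγD hγ
    have hSS : S m (cf f) β = S m (cf f') β :=
      hcoh m m (cf f) (cf f') β (fun _ _ => rfl) hagree
    obtain ⟨x, y, y', h1, h2, hyy⟩ := (hS m (cf f) β hβlt).2.2.2.2.2.2
    have hval : ∀ (c : Ordinal.{0} → Bool) (b : Bool) (hcb : c β = b) (z z' : M),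
        (z, z') ∈ (if b then (S m c β).1 else (S m c β).2) → (z, z') ∈ piset S m c := by
      intro c b hcb z z' hz
      refine (mem_piset_iff S m c).mpr ⟨β, hβlt, ?_⟩
      unfold chosen
      rw [hcb]
      exact hz
    cases hb : cf f β with
    | true =>
      have hb' : cf f' β = false := by
        cases hb2 : cf f' β
        · rfl
        · exact absurd (hb.trans hb2.symm) hβD
      have hy : Φ f x = y := hΦspec f x y (hval (cf f) true hb x y (by simpa using h1))
      have hy' : Φ f' x = y' := by
        refine hΦspec f' x y' (hval (cf f') false hb' x y' ?_)
        simpa [← hSS] using h2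
      exact hyy (by rw [← hy, ← hy', hff'])
    | false =>
      have hb' : cf f' β = true := by
        cases hb2 : cf f' β
        · exact absurd (hb.trans hb2.symm) hβD
        · rfl
      have hy : Φ f x = y' := hΦspec f x y' (hval (cf f) false hb x y' (by simpa using h2))
      have hy' : Φ f' x = y := by
        refine hΦspec f' x y (hval (cf f') true hb' x y ?_)
        simpa [← hSS] using h1
      exact hyy (by rw [← hy, ← hy', hff'])
  -- conclude by cardinal arithmetic
  have hlow : 2 ^ Cardinal.aleph 1 ≤ #(M ≃[L] M) := by
    have h1 : #(om1.ToType → Bool) = 2 ^ Cardinal.aleph 1 := by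
      rw [Cardinal.mk_arrow, Cardinal.mk_bool, Cardinal.mk_toType, Cardinal.card_ord]
      simp
    rw [← h1]
    exact Cardinal.mk_le_of_injective hΦinj
  have hup : #(M ≃[L] M) ≤ 2 ^ Cardinal.aleph 1 := by
    have h2 : #(M → M) = 2 ^ Cardinal.aleph 1 := by
      rw [Cardinal.mk_arrow]
      simp only [Cardinal.lift_id]
      rw [hM, Cardinal.power_self_eq (Cardinal.aleph0_le_aleph 1)]
    rw [← h2]
    exact Cardinal.mk_le_of_injective (f := fun (e : M ≃[L] M) => (e : M → M))
      (fun e e' h => DFunLike.coe_injective h)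
  exact le_antisymm hup hlow

end
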